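/- Under the distributed two-time-scale setup with δ ∈ (σ,1), σ + 2α0 ≤ 1, and K* a positive integer with K* ≥ (2α0/(δ−σ))^{3/2}: for every k ≥ K*, ‖X̂_k‖ + ‖Ŷ_k‖ ≤ 2·√N·(R+C)·α0·(3 + 1/(1−δ))·(K*)^{1/3}. -/

import Mathlib

/-- The Euclidean norm of a vector (represented as a function into `ℝ`). -/
noncomputable def eucEnorm {n : ℕ} (v : Fin n → ℝ) : ℝ :=
  Real.sqrt (∑ i, v i ^ 2)

/-- The Frobenius norm of an `N×d` real matrix. -/
noncomputable def fnorm {N d : ℕ} (M : Matrix (Fin N) (Fin d) ℝ) : ℝ :=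
  Real.sqrt (∑ i, ∑ j, M i j ^ 2)

lemma fnorm_nonneg {N d : ℕ} (M : Matrix (Fin N) (Fin d) ℝ) : 0 ≤ fnorm M :=
  Real.sqrt_nonneg _

lemma eucEnorm_nonneg {n : ℕ} (v : Fin n → ℝ) : 0 ≤ eucEnorm v := Real.sqrt_nonneg _

lemma eucEnorm_sq {n : ℕ} (v : Fin n → ℝ) : eucEnorm v ^ 2 = ∑ i, v i ^ 2 :=
  Real.sq_sqrt (Finset.sum_nonneg fun _ _ => sq_nonneg _)

lemma sqrt_sum_sq_add_le {ι : Type*} [Fintype ι] (f g : ι → ℝ) :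
    Real.sqrt (∑ i, (f i + g i) ^ 2) ≤
      Real.sqrt (∑ i, f i ^ 2) + Real.sqrt (∑ i, g i ^ 2) := by
  set A := Real.sqrt (∑ i, f i ^ 2) with hA'
  set B := Real.sqrt (∑ i, g i ^ 2) with hB'
  have hA : 0 ≤ A := Real.sqrt_nonneg _
  have hB : 0 ≤ B := Real.sqrt_nonneg _
  have hA2 : A ^ 2 = ∑ i, f i ^ 2 := Real.sq_sqrt (by positivity)
  have hB2 : B ^ 2 = ∑ i, g i ^ 2 := Real.sq_sqrt (by positivity)
  have hcs := Real.sum_mul_le_sqrt_mul_sqrt Finset.univ f g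
  have expand : ∑ i, (f i + g i) ^ 2 =
      (∑ i, f i ^ 2) + 2 * (∑ i, f i * g i) + (∑ i, g i ^ 2) := by
    rw [Finset.mul_sum, ← Finset.sum_add_distrib, ← Finset.sum_add_distrib]
    exact Finset.sum_congr rfl fun i _ => by ring
  have hle : ∑ i, (f i + g i) ^ 2 ≤ (A + B) ^ 2 := by
    rw [expand]; nlinarith [hcs]
  calc Real.sqrt (∑ i, (f i + g i) ^ 2) ≤ Real.sqrt ((A + B) ^ 2) :=
        Real.sqrt_le_sqrt hle
    _ = A + B := Real.sqrt_sq (by positivity)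

lemma fnorm_eq_prod {N d : ℕ} (M : Matrix (Fin N) (Fin d) ℝ) :
    fnorm M = Real.sqrt (∑ p : Fin N × Fin d, M p.1 p.2 ^ 2) := by
  rw [fnorm, Fintype.sum_prod_type]

set_option maxHeartbeats 1000000 in
lemma fnorm_add_le {N d : ℕ} (f g : Fin N → Fin d → ℝ) :
    fnorm (Matrix.of fun i j => f i j + g i j) ≤
      fnorm (Matrix.of f) + fnorm (Matrix.of g) := by
  rw [fnorm_eq_prod, fnorm_eq_prod, fnorm_eq_prod]
  simp only [Matrix.of_apply]
  have h := sqrt_sum_sq_add_le (fun p : Fin N × Fin d => f p.1 p.2)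
    (fun p => g p.1 p.2)
  convert h using 3

lemma fnorm_mul_const {N d : ℕ} (c : ℝ) (f : Fin N → Fin d → ℝ) :
    fnorm (Matrix.of fun i j => c * f i j) = |c| * fnorm (Matrix.of f) := by
  unfold fnorm
  rw [← Real.sqrt_sq_eq_abs, ← Real.sqrt_mul (sq_nonneg c)]
  congr 1
  simp [Finset.mul_sum, mul_pow]

lemma variance_le {N : ℕ} (a : Fin N → ℝ) :
    ∑ i, (a i - 1 / (N : ℝ) * ∑ l, a l) ^ 2 ≤ ∑ i, a i ^ 2 := by
  rcases Nat.eq_zero_or_pos N with h | h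
  · subst h; simp
  set m := 1 / (N : ℝ) * ∑ l, a l with hm
  have hN : (N : ℝ) ≠ 0 := by positivity
  have hs : (N : ℝ) * m = ∑ l, a l := by rw [hm]; field_simp
  have expand : ∑ i, (a i - m) ^ 2 =
      (∑ i, a i ^ 2) - 2 * m * (∑ i, a i) + (N : ℝ) * m ^ 2 := by
    have h1 : ∑ i, (a i - m) ^ 2 = ∑ i, (a i ^ 2 - 2 * m * a i + m ^ 2) :=
      Finset.sum_congr rfl fun i _ => by ring
    rw [h1, Finset.sum_add_distrib, Finset.sum_sub_distrib, ← Finset.mul_sum,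
      Finset.sum_const, Finset.card_univ, Fintype.card_fin, nsmul_eq_mul]
  have hNpos : (0 : ℝ) < N := Nat.cast_pos.mpr h
  rw [expand, ← hs]
  nlinarith [sq_nonneg m, hNpos]

lemma fnorm_op_rows {N d : ℕ} (A : Matrix (Fin d) (Fin d) ℝ)
    (hA : ∀ v, eucEnorm (A.mulVec v) ≤ eucEnorm v) (f : Fin N → Fin d → ℝ) :
    fnorm (Matrix.of fun i j => A.mulVec (f i) j) ≤ fnorm (Matrix.of f) := by
  unfold fnorm
  simp only [Matrix.of_apply]
  apply Real.sqrt_le_sqrt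
  apply Finset.sum_le_sum
  intro i _
  have h3 : eucEnorm (A.mulVec (f i)) ^ 2 ≤ eucEnorm (f i) ^ 2 :=
    pow_le_pow_left₀ (eucEnorm_nonneg _) (hA (f i)) 2
  rw [eucEnorm_sq, eucEnorm_sq] at h3
  exact h3

lemma fnorm_contract {N d : ℕ} (W : Matrix (Fin N) (Fin N) ℝ) (σ : ℝ) (hσ : 0 ≤ σ)
    (hW : ∀ v : Fin N → ℝ, (∑ i, v i = 0) → eucEnorm (W.mulVec v) ≤ σ * eucEnorm v)
    (f : Fin N → Fin d → ℝ) (hf : ∀ j, ∑ i, f i j = 0) :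
    fnorm (Matrix.of fun i j => ∑ l, W i l * f l j) ≤ σ * fnorm (Matrix.of f) := by
  have key : ∀ j, ∑ i, (∑ l, W i l * f l j) ^ 2 ≤ σ ^ 2 * ∑ i, f i j ^ 2 := by
    intro j
    have h3 : eucEnorm (W.mulVec fun l => f l j) ^ 2 ≤
        (σ * eucEnorm fun l => f l j) ^ 2 :=
      pow_le_pow_left₀ (eucEnorm_nonneg _) (hW (fun l => f l j) (hf j)) 2
    rw [eucEnorm_sq, mul_pow, eucEnorm_sq] at h3
    simpa [Matrix.mulVec, dotProduct] using h3
  unfold fnorm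
  simp only [Matrix.of_apply]
  rw [Finset.sum_comm]
  have hle : ∑ j, ∑ i, (∑ l, W i l * f l j) ^ 2 ≤
      σ ^ 2 * ∑ j, ∑ i, f i j ^ 2 := by
    rw [Finset.mul_sum]
    exact Finset.sum_le_sum fun j _ => key j
  calc Real.sqrt (∑ j, ∑ i, (∑ l, W i l * f l j) ^ 2)
      ≤ Real.sqrt (σ ^ 2 * ∑ j, ∑ i, f i j ^ 2) := Real.sqrt_le_sqrt hle
    _ = σ * Real.sqrt (∑ j, ∑ i, f i j ^ 2) := by
        rw [Real.sqrt_mul (sq_nonneg σ), Real.sqrt_sq hσ]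
    _ = σ * Real.sqrt (∑ i, ∑ j, f i j ^ 2) := by rw [Finset.sum_comm]

lemma fnorm_rows_le {N d : ℕ} (f : Fin N → Fin d → ℝ) (r : ℝ) (hr : 0 ≤ r)
    (h : ∀ i, ∑ j, f i j ^ 2 ≤ r ^ 2) :
    fnorm (Matrix.of f) ≤ Real.sqrt N * r := by
  unfold fnorm
  simp only [Matrix.of_apply]
  calc Real.sqrt (∑ i, ∑ j, f i j ^ 2) ≤ Real.sqrt (∑ _i : Fin N, r ^ 2) :=
      Real.sqrt_le_sqrt (Finset.sum_le_sum fun i _ => h i)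
    _ = Real.sqrt ((N : ℝ) * r ^ 2) := by
        rw [Finset.sum_const, Finset.card_univ, Fintype.card_fin, nsmul_eq_mul]
    _ = Real.sqrt N * r := by
        rw [Real.sqrt_mul (Nat.cast_nonneg N), Real.sqrt_sq hr]

lemma fnorm_center_le {N d : ℕ} (f : Fin N → Fin d → ℝ) :
    fnorm (Matrix.of fun i j => f i j - 1 / (N : ℝ) * ∑ l, f l j) ≤
      fnorm (Matrix.of f) := by
  unfold fnorm
  simp only [Matrix.of_apply]
  apply Real.sqrt_le_sqrt
  rw [Finset.sum_comm]
  conv_rhs => rw [Finset.sum_comm]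
  exact Finset.sum_le_sum fun j _ => variance_le (fun i => f i j)

lemma center_mulVec {N d : ℕ} (A : Matrix (Fin d) (Fin d) ℝ)
    (u : Fin N → Fin d → ℝ) (c : ℝ) (i : Fin N) (j : Fin d) :
    A.mulVec (fun j' => u i j' - c * ∑ l, u l j') j
      = A.mulVec (u i) j - c * ∑ l, A.mulVec (u l) j := by
  simp only [Matrix.mulVec, dotProduct, mul_sub]
  rw [Finset.sum_sub_distrib]
  congr 1
  rw [Finset.sum_comm, Finset.mul_sum]
  exact Finset.sum_congr rfl fun j' _ => by rw [← Finset.mul_sum]; ring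

lemma fnorm_le_of_four {N d : ℕ} (f t1 t2 t3 t4 : Fin N → Fin d → ℝ)
    (hdec : ∀ i j, f i j = t1 i j + (t2 i j + (t3 i j + t4 i j))) :
    fnorm (Matrix.of f) ≤
      fnorm (Matrix.of t1) + fnorm (Matrix.of t2) +
        fnorm (Matrix.of t3) + fnorm (Matrix.of t4) := by
  have h0 : Matrix.of f =
      Matrix.of (fun i j => t1 i j + (fun i j => t2 i j + (t3 i j + t4 i j)) i j) := by
    ext i j; simp only [Matrix.of_apply]; exact hdec i j
  rw [h0]
  have h1 := fnorm_add_le t1 (fun i j => t2 i j + (t3 i j + t4 i j))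
  have h2 := fnorm_add_le t2 (fun i j => t3 i j + t4 i j)
  have h3 := fnorm_add_le t3 t4
  linarith

lemma one_step {N d : ℕ} (hN : 0 < N)
    (W : Matrix (Fin N) (Fin N) ℝ) (σ : ℝ) (hσ : 0 ≤ σ)
    (hWrow : ∀ i, ∑ j, W i j = 1) (hWcol : ∀ j, ∑ i, W i j = 1)
    (hWc : ∀ v : Fin N → ℝ, (∑ i, v i = 0) → eucEnorm (W.mulVec v) ≤ σ * eucEnorm v)
    (A1 A2 : Matrix (Fin d) (Fin d) ℝ)
    (hA1 : ∀ v, eucEnorm (A1.mulVec v) ≤ eucEnorm v)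
    (hA2 : ∀ v, eucEnorm (A2.mulVec v) ≤ eucEnorm v)
    (b : Fin N → Fin d → ℝ) (R : ℝ) (hR : 0 ≤ R) (hb : ∀ i, eucEnorm (b i) ≤ R)
    (ξ : Fin N → Fin d → ℝ) (C : ℝ) (hC : 0 ≤ C) (hξ : ∀ i, eucEnorm (ξ i) ≤ C)
    (a : ℝ) (ha : 0 ≤ a)
    (u v un : Fin N → Fin d → ℝ)
    (hrec : ∀ i, un i = (∑ j, W i j • u j) -
        a • (A1.mulVec (u i) + A2.mulVec (v i) - b i + ξ i)) :
    fnorm (Matrix.of fun i j => un i j - 1 / (N : ℝ) * ∑ l, un l j) ≤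
      σ * fnorm (Matrix.of fun i j => u i j - 1 / (N : ℝ) * ∑ l, u l j)
      + a * (fnorm (Matrix.of fun i j => u i j - 1 / (N : ℝ) * ∑ l, u l j)
             + fnorm (Matrix.of fun i j => v i j - 1 / (N : ℝ) * ∑ l, v l j)
             + Real.sqrt N * (R + C)) := by
  have hNne : ((N : ℝ)) ≠ 0 := by
    have : (0:ℝ) < N := by exact_mod_cast hN
    exact ne_of_gt this
  set g : Fin N → Fin d → ℝ :=
    fun i j => A1.mulVec (u i) j + A2.mulVec (v i) j - b i j + ξ i j with hg
  set uf : Fin N → Fin d → ℝ :=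
    fun i j => u i j - 1 / (N : ℝ) * ∑ l, u l j with huf
  set vf : Fin N → Fin d → ℝ :=
    fun i j => v i j - 1 / (N : ℝ) * ∑ l, v l j with hvf
  have hupt : ∀ i j, un i j = (∑ l, W i l * u l j) - a * g i j := by
    intro i j
    have h := congrFun (hrec i) j
    simp only [Finset.sum_apply, Pi.smul_apply, Pi.sub_apply, Pi.add_apply,
      smul_eq_mul] at h
    rw [h]
  have hsum_un : ∀ j, ∑ i, un i j = (∑ l, u l j) - a * ∑ l, g l j := by
    intro j
    calc ∑ i, un i j = ∑ i, ((∑ l, W i l * u l j) - a * g i j) :=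
          Finset.sum_congr rfl fun i _ => hupt i j
      _ = (∑ i, ∑ l, W i l * u l j) - ∑ i, a * g i j := Finset.sum_sub_distrib _ _
      _ = (∑ l, ∑ i, W i l * u l j) - a * ∑ i, g i j := by
          rw [Finset.sum_comm, ← Finset.mul_sum]
      _ = (∑ l, u l j) - a * ∑ l, g l j := by
          congr 1
          refine Finset.sum_congr rfl fun l _ => ?_
          rw [← Finset.sum_mul, hWcol l, one_mul]
  have hUsum : ∀ j, ∑ i, uf i j = 0 := by
    intro j
    simp only [huf]
    rw [Finset.sum_sub_distrib, Finset.sum_const, Finset.card_univ,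
      Fintype.card_fin, nsmul_eq_mul]
    field_simp
    ring
  have hUnid : (Matrix.of fun i j => un i j - 1 / (N : ℝ) * ∑ l, un l j) =
      Matrix.of (fun i j => (∑ l, W i l * uf l j) +
        (-a) * (g i j - 1 / (N : ℝ) * ∑ l, g l j)) := by
    ext i j
    simp only [Matrix.of_apply]
    have hrowU : ∑ l, W i l * uf l j =
        (∑ l, W i l * u l j) - 1 / (N : ℝ) * ∑ l, u l j := by
      simp only [huf, mul_sub]
      rw [Finset.sum_sub_distrib, ← Finset.sum_mul, hWrow i, one_mul]
    rw [hupt i j, hsum_un j, hrowU]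
    ring
  -- decomposition of the centered g
  have hsplit : ∀ j, ∑ l, g l j = (∑ l, A1.mulVec (u l) j) +
      (∑ l, A2.mulVec (v l) j) - (∑ l, b l j) + (∑ l, ξ l j) := by
    intro j
    simp only [hg]
    rw [Finset.sum_add_distrib, Finset.sum_sub_distrib, Finset.sum_add_distrib]
  have hGdec : ∀ i j, g i j - 1 / (N : ℝ) * ∑ l, g l j =
      A1.mulVec (uf i) j + (A2.mulVec (vf i) j +
        ((-(b i j) - 1 / (N : ℝ) * ∑ l, -(b l j)) +
          (ξ i j - 1 / (N : ℝ) * ∑ l, ξ l j))) := by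
    intro i j
    have h1 : A1.mulVec (uf i) j =
        A1.mulVec (u i) j - 1 / (N : ℝ) * ∑ l, A1.mulVec (u l) j := by
      simp only [huf]
      exact center_mulVec A1 u (1 / (N : ℝ)) i j
    have h2 : A2.mulVec (vf i) j =
        A2.mulVec (v i) j - 1 / (N : ℝ) * ∑ l, A2.mulVec (v l) j := by
      simp only [hvf]
      exact center_mulVec A2 v (1 / (N : ℝ)) i j
    have hneg : ∑ l, -(b l j) = -∑ l, b l j := by
      rw [Finset.sum_neg_distrib]
    rw [h1, h2, hneg, hsplit j]
    simp only [hg]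
    ring
  have hGb : fnorm (Matrix.of fun i j => g i j - 1 / (N : ℝ) * ∑ l, g l j) ≤
      fnorm (Matrix.of uf) + fnorm (Matrix.of vf) + Real.sqrt N * (R + C) := by
    have h4 := fnorm_le_of_four
      (fun i j => g i j - 1 / (N : ℝ) * ∑ l, g l j)
      (fun i j => A1.mulVec (uf i) j)
      (fun i j => A2.mulVec (vf i) j)
      (fun i j => -(b i j) - 1 / (N : ℝ) * ∑ l, -(b l j))
      (fun i j => ξ i j - 1 / (N : ℝ) * ∑ l, ξ l j)
      hGdec
    have bT1 := fnorm_op_rows A1 hA1 uf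
    have bT2 := fnorm_op_rows A2 hA2 vf
    have bT3 : fnorm (Matrix.of fun i j => -(b i j) - 1 / (N : ℝ) * ∑ l, -(b l j)) ≤
        Real.sqrt N * R := by
      refine le_trans (fnorm_center_le (fun i j => -(b i j))) ?_
      refine fnorm_rows_le _ R hR ?_
      intro i
      have := pow_le_pow_left₀ (eucEnorm_nonneg (b i)) (hb i) 2
      rw [eucEnorm_sq] at this
      simpa using this
    have bT4 : fnorm (Matrix.of fun i j => ξ i j - 1 / (N : ℝ) * ∑ l, ξ l j) ≤
        Real.sqrt N * C := by
      refine le_trans (fnorm_center_le ξ) ?_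
      refine fnorm_rows_le _ C hC ?_
      intro i
      have := pow_le_pow_left₀ (eucEnorm_nonneg (ξ i)) (hξ i) 2
      rw [eucEnorm_sq] at this
      exact this
    have : Real.sqrt N * R + Real.sqrt N * C = Real.sqrt N * (R + C) := by ring
    linarith
  -- put it together
  rw [hUnid]
  have htri : fnorm (Matrix.of (fun i j => (∑ l, W i l * uf l j) +
      (-a) * (g i j - 1 / (N : ℝ) * ∑ l, g l j))) ≤
      fnorm (Matrix.of fun i j => ∑ l, W i l * uf l j) +
      fnorm (Matrix.of fun i j => (-a) * (g i j - 1 / (N : ℝ) * ∑ l, g l j)) :=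
    fnorm_add_le _ _
  have hcon := fnorm_contract W σ hσ hWc uf hUsum
  have hmc := fnorm_mul_const (-a) (fun i j => g i j - 1 / (N : ℝ) * ∑ l, g l j)
  rw [abs_neg, abs_of_nonneg ha] at hmc
  have hGb' := mul_le_mul_of_nonneg_left hGb ha
  linarith [htri, hcon, hmc, hGb']

lemma sum_rpow_bound (K : ℕ) :
    ∑ j ∈ Finset.range K, 1 / ((j : ℝ) + 1) ^ ((2 : ℝ) / 3) ≤
      3 * (K : ℝ) ^ ((1 : ℝ) / 3) := by
  induction K with
  | zero => simp
  | succ K ih =>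
    rw [Finset.sum_range_succ]
    push_cast
    set a := (K : ℝ) ^ ((1 : ℝ) / 3) with ha
    set b := ((K : ℝ) + 1) ^ ((1 : ℝ) / 3) with hb
    have hK0 : (0 : ℝ) ≤ K := Nat.cast_nonneg K
    have hb0 : 0 < b := Real.rpow_pos_of_pos (by linarith) _
    have ha0 : 0 ≤ a := Real.rpow_nonneg hK0 _
    have hab : a ≤ b := Real.rpow_le_rpow hK0 (by linarith) (by norm_num)
    have ha3 : a ^ 3 = (K : ℝ) := by
      rw [ha, ← Real.rpow_natCast ((K : ℝ) ^ ((1 : ℝ) / 3)) 3,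
        ← Real.rpow_mul hK0]
      norm_num
    have hb3 : b ^ 3 = (K : ℝ) + 1 := by
      rw [hb, ← Real.rpow_natCast (((K : ℝ) + 1) ^ ((1 : ℝ) / 3)) 3,
        ← Real.rpow_mul (by linarith : (0:ℝ) ≤ (K : ℝ) + 1)]
      norm_num
    have hpow : ((K : ℝ) + 1) ^ ((2 : ℝ) / 3) = b ^ 2 := by
      rw [hb, ← Real.rpow_natCast (((K : ℝ) + 1) ^ ((1 : ℝ) / 3)) 2,
        ← Real.rpow_mul (by linarith : (0:ℝ) ≤ (K : ℝ) + 1)]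
      norm_num
    rw [hpow]
    have hkey : 1 / b ^ 2 ≤ 3 * (b - a) := by
      rw [div_le_iff₀ (by positivity)]
      nlinarith [mul_nonneg (mul_nonneg (sub_nonneg.mpr hab) (sub_nonneg.mpr hab))
        (by linarith : (0:ℝ) ≤ 2 * b + a)]
    have : 3 * a + 3 * (b - a) = 3 * b := by ring
    linarith [ih]


set_option maxHeartbeats 2000000 in
/-- Under the distributed two-time-scale setup with `δ ∈ (σ,1)`, `σ + 2α0 ≤ 1`,
and `K*` a positive integer with `K* ≥ (2α0/(δ−σ))^(3/2)`: for every `k ≥ K*`,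
`‖X̂_k‖ + ‖Ŷ_k‖ ≤ 2√N(R+C)α0(3 + 1/(1−δ))(K*)^(1/3)`. -/
theorem stmt_9
    {N d : ℕ} (hN : 0 < N) (hd : 0 < d) (R C : ℝ) (hR : 0 ≤ R) (hC : 0 ≤ C)
    (W V : Matrix (Fin N) (Fin N) ℝ)
    (hWnonneg : ∀ i j, 0 ≤ W i j) (hWrow : ∀ i, ∑ j, W i j = 1)
    (hWcol : ∀ j, ∑ i, W i j = 1)
    (hVnonneg : ∀ i j, 0 ≤ V i j) (hVrow : ∀ i, ∑ j, V i j = 1)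
    (hVcol : ∀ j, ∑ i, V i j = 1)
    (σ : ℝ) (hσ0 : 0 < σ) (hσ1 : σ < 1)
    (hWcontract : ∀ v : Fin N → ℝ, (∑ i, v i = 0) → eucEnorm (W.mulVec v) ≤ σ * eucEnorm v)
    (hVcontract : ∀ v : Fin N → ℝ, (∑ i, v i = 0) → eucEnorm (V.mulVec v) ≤ σ * eucEnorm v)
    (A11 A12 A21 A22 : Matrix (Fin d) (Fin d) ℝ)
    (hA11 : ∀ v, eucEnorm (A11.mulVec v) ≤ eucEnorm v)
    (hA12 : ∀ v, eucEnorm (A12.mulVec v) ≤ eucEnorm v)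
    (hA21 : ∀ v, eucEnorm (A21.mulVec v) ≤ eucEnorm v)
    (hA22 : ∀ v, eucEnorm (A22.mulVec v) ≤ eucEnorm v)
    (b1 b2 : Fin N → Fin d → ℝ)
    (hb1 : ∀ i, eucEnorm (b1 i) ≤ R) (hb2 : ∀ i, eucEnorm (b2 i) ≤ R)
    (ξ ψ : ℕ → Fin N → Fin d → ℝ)
    (hξ : ∀ k i, eucEnorm (ξ k i) ≤ C) (hψ : ∀ k i, eucEnorm (ψ k i) ≤ C)
    (α0 β0 : ℝ) (hβ0 : 0 < β0) (hβα : β0 ≤ α0)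
    (α β : ℕ → ℝ)
    (hα : ∀ k, α k = α0 / ((k : ℝ) + 1) ^ ((2 : ℝ) / 3))
    (hβ : ∀ k, β k = β0 / ((k : ℝ) + 1))
    (x y : ℕ → Fin N → Fin d → ℝ)
    (hx0 : ∀ i, x 0 i = 0) (hy0 : ∀ i, y 0 i = 0)
    (hxrec : ∀ k i, x (k + 1) i =
      (∑ j, W i j • x k j) -
        α k • (A11.mulVec (x k i) + A12.mulVec (y k i) - b1 i + ξ k i))
    (hyrec : ∀ k i, y (k + 1) i =
      (∑ j, V i j • y k j) -
        β k • (A21.mulVec (x k i) + A22.mulVec (y k i) - b2 i + ψ k i))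
    (xbar ybar : ℕ → Fin d → ℝ)
    (hxbar : ∀ k, xbar k = (1 / (N : ℝ)) • ∑ i, x k i)
    (hybar : ∀ k, ybar k = (1 / (N : ℝ)) • ∑ i, y k i)
    (Xhat Yhat : ℕ → Matrix (Fin N) (Fin d) ℝ)
    (hXhat : ∀ k, Xhat k = Matrix.of fun i j => x k i j - xbar k j)
    (hYhat : ∀ k, Yhat k = Matrix.of fun i j => y k i j - ybar k j)
    (δ : ℝ) (hδσ : σ < δ) (hδ1 : δ < 1) (hσα : σ + 2 * α0 ≤ 1)
    (Kstar : ℕ) (hKpos : 1 ≤ Kstar)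
    (hKstar : (2 * α0 / (δ - σ)) ^ ((3 : ℝ) / 2) ≤ (Kstar : ℝ))
    (k : ℕ) (hk : Kstar ≤ k) :
    fnorm (Xhat k) + fnorm (Yhat k) ≤
      2 * Real.sqrt N * (R + C) * α0 * (3 + 1 / (1 - δ)) * (Kstar : ℝ) ^ ((1 : ℝ) / 3) := by
  have hNR : (0 : ℝ) < N := by exact_mod_cast hN
  have hNne : (N : ℝ) ≠ 0 := ne_of_gt hNR
  have hα0 : 0 < α0 := lt_of_lt_of_le hβ0 hβα
  set c := Real.sqrt N * (R + C) with hc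
  have hc0 : 0 ≤ c := mul_nonneg (Real.sqrt_nonneg _) (by linarith)
  -- pointwise forms
  have hXof : ∀ k, Xhat k =
      Matrix.of fun i j => x k i j - 1 / (N : ℝ) * ∑ l, x k l j := by
    intro k
    rw [hXhat k]
    ext i j
    simp only [Matrix.of_apply]
    rw [hxbar k]
    simp [Finset.sum_apply, Pi.smul_apply, smul_eq_mul]
  have hYof : ∀ k, Yhat k =
      Matrix.of fun i j => y k i j - 1 / (N : ℝ) * ∑ l, y k l j := by
    intro k
    rw [hYhat k]
    ext i j
    simp only [Matrix.of_apply]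
    rw [hybar k]
    simp [Finset.sum_apply, Pi.smul_apply, smul_eq_mul]
  -- step sizes
  have hone : ∀ k : ℕ, (1 : ℝ) ≤ (k : ℝ) + 1 := by
    intro k
    have : (0 : ℝ) ≤ k := Nat.cast_nonneg k
    linarith
  have hrpow1 : ∀ k : ℕ, (1 : ℝ) ≤ ((k : ℝ) + 1) ^ ((2 : ℝ) / 3) := by
    intro k
    calc (1 : ℝ) = (1 : ℝ) ^ ((2 : ℝ) / 3) := (Real.one_rpow _).symm
      _ ≤ ((k : ℝ) + 1) ^ ((2 : ℝ) / 3) :=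
        Real.rpow_le_rpow (by norm_num) (hone k) (by norm_num)
  have hαpos : ∀ k, 0 < α k := by
    intro k
    rw [hα k]
    have := hrpow1 k
    positivity
  have hβpos : ∀ k, 0 < β k := by
    intro k
    rw [hβ k]
    have := hone k
    positivity
  have hαle : ∀ k, α k ≤ α0 := by
    intro k
    rw [hα k]
    exact div_le_self hα0.le (hrpow1 k)
  have hβle : ∀ k, β k ≤ α k := by
    intro k
    rw [hα k, hβ k]
    have h23 : ((k : ℝ) + 1) ^ ((2 : ℝ) / 3) ≤ (k : ℝ) + 1 := by
      calc ((k : ℝ) + 1) ^ ((2 : ℝ) / 3) ≤ ((k : ℝ) + 1) ^ ((1 : ℝ)) :=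
            Real.rpow_le_rpow_of_exponent_le (hone k) (by norm_num)
        _ = (k : ℝ) + 1 := Real.rpow_one _
    have hp : (0 : ℝ) < ((k : ℝ) + 1) ^ ((2 : ℝ) / 3) := by
      linarith [hrpow1 k]
    calc β0 / ((k : ℝ) + 1) ≤ α0 / ((k : ℝ) + 1) := by gcongr
      _ ≤ α0 / ((k : ℝ) + 1) ^ ((2 : ℝ) / 3) := by gcongr
  -- z sequence
  set z : ℕ → ℝ := fun k => fnorm (Xhat k) + fnorm (Yhat k) with hzdef
  have hznn : ∀ k, 0 ≤ z k := fun k =>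
    add_nonneg (fnorm_nonneg _) (fnorm_nonneg _)
  have hz0 : z 0 = 0 := by
    have hx' : fnorm (Xhat 0) = 0 := by
      rw [hXhat 0]
      unfold fnorm
      have hzero : ∀ i j, x 0 i j - xbar 0 j = 0 := by
        intro i j
        rw [hxbar 0]
        simp [hx0]
      simp [hzero]
    have hy' : fnorm (Yhat 0) = 0 := by
      rw [hYhat 0]
      unfold fnorm
      have hzero : ∀ i j, y 0 i j - ybar 0 j = 0 := by
        intro i j
        rw [hybar 0]
        simp [hy0]
      simp [hzero]
    simp [hzdef, hx', hy']
  -- one-step recursions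
  have hXstep : ∀ k, fnorm (Xhat (k + 1)) ≤ σ * fnorm (Xhat k) +
      α k * (fnorm (Xhat k) + fnorm (Yhat k) + c) := by
    intro k
    have h := one_step hN W σ hσ0.le hWrow hWcol hWcontract A11 A12 hA11 hA12
      b1 R hR hb1 (ξ k) C hC (hξ k) (α k) (hαpos k).le (x k) (y k) (x (k + 1))
      (hxrec k)
    rw [hXof (k + 1), hXof k, hYof k, hc]
    exact h
  have hYstep : ∀ k, fnorm (Yhat (k + 1)) ≤ σ * fnorm (Yhat k) +
      β k * (fnorm (Yhat k) + fnorm (Xhat k) + c) := by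
    intro k
    have hrec' : ∀ i, y (k + 1) i = (∑ j, V i j • y k j) -
        β k • (A22.mulVec (y k i) + A21.mulVec (x k i) - b2 i + ψ k i) := by
      intro i
      rw [hyrec k i, add_comm (A21.mulVec (x k i)) (A22.mulVec (y k i))]
    have h := one_step hN V σ hσ0.le hVrow hVcol hVcontract A22 A21 hA22 hA21
      b2 R hR hb2 (ψ k) C hC (hψ k) (β k) (hβpos k).le (y k) (x k) (y (k + 1))
      hrec'
    rw [hYof (k + 1), hYof k, hXof k, hc]
    exact h
  have hzstep : ∀ k, z (k + 1) ≤ (σ + 2 * α k) * z k + 2 * α k * c := by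
    intro k
    have hx' := hXstep k
    have hy' := hYstep k
    have hzk : 0 ≤ fnorm (Xhat k) + fnorm (Yhat k) + c :=
      add_nonneg (hznn k) hc0
    have hmul : β k * (fnorm (Yhat k) + fnorm (Xhat k) + c) ≤
        α k * (fnorm (Xhat k) + fnorm (Yhat k) + c) := by
      have he : fnorm (Yhat k) + fnorm (Xhat k) + c =
          fnorm (Xhat k) + fnorm (Yhat k) + c := by ring
      rw [he]
      exact mul_le_mul_of_nonneg_right (hβle k) hzk
    have heq : σ * fnorm (Xhat k) + α k * (fnorm (Xhat k) + fnorm (Yhat k) + c)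
        + (σ * fnorm (Yhat k) + α k * (fnorm (Xhat k) + fnorm (Yhat k) + c))
        = (σ + 2 * α k) * z k + 2 * α k * c := by
      simp only [hzdef]
      ring
    simp only [hzdef]
    simp only [hzdef] at heq
    linarith
  -- phase 1
  have hσ2α : ∀ k, σ + 2 * α k ≤ 1 := by
    intro k
    have := hαle k
    linarith
  have hphase1 : ∀ K : ℕ, z K ≤ 2 * c * ∑ j ∈ Finset.range K, α j := by
    intro K
    induction K with
    | zero => simp [hz0]
    | succ K ih =>
      have h1 := hzstep K
      have h2 : (σ + 2 * α K) * z K ≤ 1 * z K :=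
        mul_le_mul_of_nonneg_right (hσ2α K) (hznn K)
      rw [Finset.sum_range_succ]
      have heq : 2 * c * (∑ j ∈ Finset.range K, α j + α K) =
          2 * c * ∑ j ∈ Finset.range K, α j + 2 * α K * c := by ring
      linarith
  have hzK : z Kstar ≤ 2 * c * α0 * (3 * (Kstar : ℝ) ^ ((1 : ℝ) / 3)) := by
    have h1 := hphase1 Kstar
    have h2 : ∑ j ∈ Finset.range Kstar, α j =
        α0 * ∑ j ∈ Finset.range Kstar, 1 / ((j : ℝ) + 1) ^ ((2 : ℝ) / 3) := by
      rw [Finset.mul_sum]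
      exact Finset.sum_congr rfl fun j _ => by rw [hα j]; ring
    have h3 := sum_rpow_bound Kstar
    have h4 : 2 * c * ∑ j ∈ Finset.range Kstar, α j ≤
        2 * c * α0 * (3 * (Kstar : ℝ) ^ ((1 : ℝ) / 3)) := by
      rw [h2]
      have := mul_le_mul_of_nonneg_left h3 hα0.le
      nlinarith [hc0]
    exact le_trans h1 h4
  -- phase 2 preliminaries
  have hKpos' : (1 : ℝ) ≤ (Kstar : ℝ) := by exact_mod_cast hKpos
  have hK13 : (1 : ℝ) ≤ (Kstar : ℝ) ^ ((1 : ℝ) / 3) := by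
    calc (1 : ℝ) = (1 : ℝ) ^ ((1 : ℝ) / 3) := (Real.one_rpow _).symm
      _ ≤ (Kstar : ℝ) ^ ((1 : ℝ) / 3) :=
        Real.rpow_le_rpow (by norm_num) hKpos' (by norm_num)
  have hK23 : (1 : ℝ) ≤ (Kstar : ℝ) ^ ((2 : ℝ) / 3) := by
    calc (1 : ℝ) = (1 : ℝ) ^ ((2 : ℝ) / 3) := (Real.one_rpow _).symm
      _ ≤ (Kstar : ℝ) ^ ((2 : ℝ) / 3) :=
        Real.rpow_le_rpow (by norm_num) hKpos' (by norm_num)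
  have hδσpos : (0 : ℝ) < δ - σ := by linarith
  have ht0 : (0 : ℝ) ≤ 2 * α0 / (δ - σ) := by positivity
  have hδσ2 : 2 * α0 / (δ - σ) ≤ (Kstar : ℝ) ^ ((2 : ℝ) / 3) := by
    have h := Real.rpow_le_rpow (Real.rpow_nonneg ht0 _) hKstar
      (by norm_num : (0 : ℝ) ≤ 2 / 3)
    have heq : ((2 * α0 / (δ - σ)) ^ ((3 : ℝ) / 2)) ^ ((2 : ℝ) / 3) =
        2 * α0 / (δ - σ) := by
      rw [← Real.rpow_mul ht0]
      norm_num
    rw [heq] at h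
    exact h
  have hαK : ∀ k, Kstar ≤ k → σ + 2 * α k ≤ δ := by
    intro k hk'
    have hkc : (Kstar : ℝ) ≤ (k : ℝ) := by exact_mod_cast hk'
    have hmon : (Kstar : ℝ) ^ ((2 : ℝ) / 3) ≤ ((k : ℝ) + 1) ^ ((2 : ℝ) / 3) :=
      Real.rpow_le_rpow (Nat.cast_nonneg _) (by linarith) (by norm_num)
    have hKp : (0 : ℝ) < (Kstar : ℝ) ^ ((2 : ℝ) / 3) := by linarith
    have h1 : α k ≤ α0 / (Kstar : ℝ) ^ ((2 : ℝ) / 3) := by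
      rw [hα k]
      gcongr
    have h2 : α0 / (Kstar : ℝ) ^ ((2 : ℝ) / 3) ≤ (δ - σ) / 2 := by
      rw [div_le_div_iff₀ hKp (by norm_num : (0:ℝ) < 2)]
      have h3 := mul_le_mul_of_nonneg_left hδσ2 (le_of_lt (half_pos hδσpos))
      have h4 : (δ - σ) / 2 * (2 * α0 / (δ - σ)) = α0 := by
        field_simp
      nlinarith [h3, h4]
    linarith
  -- phase 2 induction
  set Mb := 2 * c * α0 * (3 + 1 / (1 - δ)) * (Kstar : ℝ) ^ ((1 : ℝ) / 3) with hMb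
  have hδ0 : (0 : ℝ) < 1 - δ := by linarith
  have hq : (0 : ℝ) ≤ 2 * c * α0 :=
    mul_nonneg (mul_nonneg (by norm_num) hc0) hα0.le
  have hbase : z Kstar ≤ Mb := by
    have hstep : 2 * c * α0 * (3 * (Kstar : ℝ) ^ ((1 : ℝ) / 3)) ≤ Mb := by
      rw [hMb]
      have hinv : (0 : ℝ) ≤ 1 / (1 - δ) := by positivity
      have h13 : (0 : ℝ) ≤ (Kstar : ℝ) ^ ((1 : ℝ) / 3) := by linarith
      nlinarith [mul_nonneg hq h13, mul_nonneg (mul_nonneg hq h13) hinv]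
    exact le_trans hzK hstep
  have h4 : 2 * c * α0 ≤ (1 - δ) * Mb := by
    rw [hMb]
    have he : (1 - δ) * (1 / (1 - δ)) = 1 := by field_simp
    have hK13' : (0 : ℝ) ≤ (Kstar : ℝ) ^ ((1 : ℝ) / 3) - 1 := by linarith
    nlinarith [mul_nonneg hq hK13', mul_nonneg (mul_nonneg hq hδ0.le) hK13',
      mul_nonneg hq hδ0.le]
  have hind : ∀ m, Kstar ≤ m → z m ≤ Mb := by
    intro m hm
    induction m, hm using Nat.le_induction with
    | base => exact hbase
    | succ n hn ih =>
      have h1 := hzstep n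
      have h2 : (σ + 2 * α n) * z n ≤ δ * Mb :=
        mul_le_mul (hαK n hn) ih (hznn n) (by linarith)
      have h3 : 2 * α n * c ≤ 2 * c * α0 := by
        nlinarith [mul_le_mul_of_nonneg_right (hαle n) hc0]
      linarith
  have hfin := hind k hk
  have hzk' : fnorm (Xhat k) + fnorm (Yhat k) = z k := rfl
  rw [hzk', ]
  calc z k ≤ Mb := hfin
    _ = 2 * Real.sqrt N * (R + C) * α0 * (3 + 1 / (1 - δ)) *
        (Kstar : ℝ) ^ ((1 : ℝ) / 3) := by rw [hMb, hc]; ring
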